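/- Let X be a topological space and suppose X = A ∪ B where A is open in X. Then the Pillay rank satisfies RK(X) ≤ RK(B) + RK(A) + 1, where + denotes ordinal addition. -/

import Mathlib

/-- Auxiliary definition by well-founded recursion on ordinals. -/
noncomputable def PRankGeAux {X : Type u} [TopologicalSpace X] :
    Ordinal.{u} → Set X → Prop :=
  WellFounded.fix Ordinal.lt_wf fun α ih S =>
    S.Nonempty ∧ ∀ β (h : β < α), ∃ Y : Set X, Y ⊆ S ∧ Y = closure Y ∩ S ∧
      (¬ ∃ U : Set X, IsOpen U ∧ (U ∩ S).Nonempty ∧ U ∩ S ⊆ closure Y) ∧ ih β h Y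

/-- `PRankGe S α` expresses that the Pillay rank of the subset `S` (with its subspace
topology) is at least the ordinal `α`: `S` is nonempty, and for every `β < α` there is a
subset `Y ⊆ S` which is closed in `S` (i.e. `Y = closure Y ∩ S`), nowhere dense in `S`
(no nonempty relatively open subset of `S` is contained in the closure of `Y`), and of
rank at least `β`. -/
noncomputable def PRankGe {X : Type u} [TopologicalSpace X] (S : Set X)
    (α : Ordinal.{u}) : Prop :=
  PRankGeAux α S

lemma prankge_iff {X : Type u} [TopologicalSpace X] (S : Set X) (α : Ordinal.{u}) :
    PRankGe S α ↔ S.Nonempty ∧ ∀ β < α, ∃ Y : Set X, Y ⊆ S ∧ Y = closure Y ∩ S ∧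
      (¬ ∃ U : Set X, IsOpen U ∧ (U ∩ S).Nonempty ∧ U ∩ S ⊆ closure Y) ∧ PRankGe Y β := by
  unfold PRankGe PRankGeAux
  rw [WellFounded.fix_eq]

lemma prankge_nonempty {X : Type u} [TopologicalSpace X] {S : Set X} {α : Ordinal.{u}}
    (h : PRankGe S α) : S.Nonempty := ((prankge_iff S α).1 h).1

lemma prankge_mono_ord {X : Type u} [TopologicalSpace X] {S : Set X} {α β : Ordinal.{u}}
    (hβα : β ≤ α) (h : PRankGe S α) : PRankGe S β := by
  rw [prankge_iff] at h ⊢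
  exact ⟨h.1, fun γ hγ => h.2 γ (lt_of_lt_of_le hγ hβα)⟩

lemma prankge_mono_set {X : Type u} [TopologicalSpace X] (α : Ordinal.{u}) :
    ∀ {S T : Set X}, S ⊆ T → PRankGe S α → PRankGe T α := by
  induction α using Ordinal.induction with
  | h α IH =>
    intro S T hST hS
    rw [prankge_iff] at hS ⊢
    refine ⟨hS.1.mono hST, fun β hβ => ?_⟩
    obtain ⟨Z, hZS, hZcl, hZnd, hZrk⟩ := hS.2 β hβ
    have hZZ' : Z ⊆ closure Z ∩ T := fun x hx => ⟨subset_closure hx, hST (hZS hx)⟩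
    have hclZ' : closure (closure Z ∩ T) = closure Z := by
      apply subset_antisymm
      · exact (closure_mono Set.inter_subset_left).trans (by rw [closure_closure])
      · exact closure_mono hZZ'
    refine ⟨closure Z ∩ T, Set.inter_subset_right, ?_, ?_, IH β hβ hZZ' hZrk⟩
    · rw [hclZ']
    · rintro ⟨U, hU, hUne, hUsub⟩
      rw [hclZ'] at hUsub
      obtain ⟨x, hxU, hxT⟩ := hUne
      have hxcl : x ∈ closure Z := hUsub ⟨hxU, hxT⟩
      obtain ⟨y, hyU, hyZ⟩ := mem_closure_iff.1 hxcl U hU hxU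
      exact hZnd ⟨U, hU, ⟨y, hyU, hZS hyZ⟩,
        fun w hw => hUsub ⟨hw.1, hST hw.2⟩⟩

lemma prankge_step {X : Type u} [TopologicalSpace X] {S Y : Set X} {β : Ordinal.{u}}
    (hYS : Y ⊆ S) (hYcl : Y = closure Y ∩ S)
    (hYnd : ¬ ∃ U : Set X, IsOpen U ∧ (U ∩ S).Nonempty ∧ U ∩ S ⊆ closure Y)
    (hY : PRankGe Y β) : PRankGe S (β + 1) := by
  rw [prankge_iff]
  refine ⟨(prankge_nonempty hY).mono hYS, fun γ hγ => ?_⟩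
  have hγβ : γ ≤ β := by
    rwa [Ordinal.add_one_eq_succ, Order.lt_succ_iff] at hγ
  exact ⟨Y, hYS, hYcl, hYnd, prankge_mono_ord hγβ hY⟩

lemma prankge_main {X : Type u} [TopologicalSpace X] {A B : Set X}
    (hcover : A ∪ B = Set.univ) (hA : IsOpen A) (b : Ordinal.{u}) :
    ∀ α : Ordinal.{u}, ∀ S : Set X, ¬ PRankGe (S ∩ A) α → ¬ PRankGe (S ∩ B) (b + 1) →
      ¬ PRankGe S (b + α + 1) := by
  intro α
  induction α using Ordinal.induction with
  | h α IH =>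
    intro S hSA hSB hS
    by_cases hne : (S ∩ A).Nonempty
    · -- extract a witness ordinal γ < α where S ∩ A has no good subset
      rw [prankge_iff] at hSA
      have h2 : ¬ ∀ β < α, ∃ Y : Set X, Y ⊆ S ∩ A ∧ Y = closure Y ∩ (S ∩ A) ∧
          (¬ ∃ U : Set X, IsOpen U ∧ (U ∩ (S ∩ A)).Nonempty ∧ U ∩ (S ∩ A) ⊆ closure Y) ∧
          PRankGe Y β := fun h => hSA ⟨hne, h⟩
      obtain ⟨γ, hγ⟩ := not_forall.1 h2
      obtain ⟨hγα, hno⟩ := _root_.not_imp.1 hγ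
      have hle : b + γ + 1 + 1 ≤ b + α + 1 := by
        have : γ + 1 ≤ α := by
          rw [Ordinal.add_one_eq_succ]; exact Order.succ_le_of_lt hγα
        calc b + γ + 1 + 1 = b + (γ + 1) + 1 := by rw [add_assoc b γ 1]
          _ ≤ b + α + 1 := add_le_add_left (add_le_add_right this b) 1
      have hS' : PRankGe S (b + γ + 1 + 1) := prankge_mono_ord hle hS
      rw [prankge_iff] at hS'
      obtain ⟨Y, hYS, hYcl, hYnd, hYrk⟩ := hS'.2 (b + γ + 1) (lt_add_one _)
      refine IH γ hγα Y ?_ ?_ hYrk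
      · -- ¬ PRankGe (Y ∩ A) γ
        intro h
        refine hno ⟨Y ∩ A, Set.inter_subset_inter_left A hYS, ?_, ?_, h⟩
        · -- Y ∩ A closed in S ∩ A
          ext x
          constructor
          · intro hx
            exact ⟨subset_closure hx, hYS hx.1, hx.2⟩
          · rintro ⟨hxcl, hxS, hxA⟩
            have : x ∈ Y := by
              rw [hYcl]
              exact ⟨closure_mono Set.inter_subset_left hxcl, hxS⟩
            exact ⟨this, hxA⟩
        · -- Y ∩ A nowhere dense in S ∩ A
          rintro ⟨U, hU, hUne, hUsub⟩
          refine hYnd ⟨U ∩ A, hU.inter hA, ?_, ?_⟩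
          · obtain ⟨x, hxU, hxS, hxA⟩ := hUne
            exact ⟨x, ⟨hxU, hxA⟩, hxS⟩
          · rintro w ⟨⟨hwU, hwA⟩, hwS⟩
            exact closure_mono Set.inter_subset_left (hUsub ⟨hwU, hwS, hwA⟩)
      · -- ¬ PRankGe (Y ∩ B) (b + 1)
        intro h
        exact hSB (prankge_mono_set _ (Set.inter_subset_inter_left B hYS) h)
    · -- S ∩ A empty, so S ⊆ B
      have hSsubB : S ∩ B = S := by
        apply Set.inter_eq_self_of_subset_left
        intro x hx
        have : x ∈ A ∪ B := hcover ▸ Set.mem_univ x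
        rcases this with hxA | hxB
        · exact absurd ⟨x, hx, hxA⟩ hne
        · exact hxB
      apply hSB
      rw [hSsubB]
      refine prankge_mono_ord ?_ hS
      calc b + 1 ≤ b + (α + 1) := add_le_add_right (le_add_self (a := 1) (b := α)) b
        _ = b + α + 1 := (add_assoc b α 1).symm

/-- If the topological space `X` is the union of an open set `A` and a set `B`, and the
Pillay ranks of `A` and `B` are the ordinals `a` and `b` respectively, then
`RK(X) ≤ b + a + 1` (ordinal sum), i.e. `X` does not have rank `≥ b + a + 1 + 1`. -/
theorem stmt9 {X : Type u} [TopologicalSpace X] (A B : Set X)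
    (hcover : A ∪ B = Set.univ) (hA : IsOpen A) (a b : Ordinal.{u})
    (hrkA : PRankGe A a ∧ ¬ PRankGe A (a + 1))
    (hrkB : PRankGe B b ∧ ¬ PRankGe B (b + 1)) :
    ¬ PRankGe (Set.univ : Set X) (b + a + 1 + 1) := by
  have h := prankge_main hcover hA b (a + 1) Set.univ
    (by rw [Set.univ_inter]; exact hrkA.2)
    (by rw [Set.univ_inter]; exact hrkB.2)
  rwa [show b + (a + 1) + 1 = b + a + 1 + 1 by rw [add_assoc b a 1]] at h
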